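/- Suppose λ is an eigenspinor of the square of the Sen–Witten operator with eigenvalue α² > 0, set μ^A := -(i√2/α)𝒟^A_{A'}λ̄^{A'}, and suppose both satisfy the 3-surface twistor equation, so 𝒟_e λ^A = -iα(√2/3)P^{AA'}_e μ̄_{A'} and 𝒟_e μ^A = iα(√2/3)P^{AA'}_e λ̄_{A'}. If μ^A = F·λ^A on an open set U for a smooth function F, then (2FF̄ + α²)·P^{AA'}_e λ_A λ̄_{A'} = 0 on U, and hence λ^A vanishes on U. -/

import Mathlib

open scoped ComplexConjugate

/-- The soldering forms `P^{AA'}_e` of the spacelike hypersurface in a spin frame adapted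
to the normal: the `1/√2`-normalized Pauli matrices. -/
noncomputable def pauliN : Fin 3 → Matrix (Fin 2) (Fin 2) ℂ :=
  ![((((Real.sqrt 2)⁻¹ : ℝ) : ℂ)) • !![0, 1; 1, 0],
    ((((Real.sqrt 2)⁻¹ : ℝ) : ℂ)) • !![0, -Complex.I; Complex.I, 0],
    ((((Real.sqrt 2)⁻¹ : ℝ) : ℂ)) • !![1, 0; 0, -1]]

/-- The symplectic pairing `λ_A μ^A` of two spinors. -/
def spPair (a b : Fin 2 → ℂ) : ℂ := a 0 * b 1 - a 1 * b 0

/-- Suppose `λ` is an eigenspinor of the square of the Sen–Witten operator with eigenvalue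
`α² > 0`, `μ^A := -(i√2/α)𝒟^A_{A'}λ̄^{A'}`, and both satisfy the 3-surface twistor
equation, so that `𝒟_e λ^A = -iα(√2/3) P^{AA'}_e μ̄_{A'}` and
`𝒟_e μ^A = iα(√2/3) P^{AA'}_e λ̄_{A'}` (hypotheses `htw1`, `htw2`), while the Sen
derivative obeys the Leibniz rule against the symplectic pairing and reduces to the
coordinate derivative on scalars (`hLeib`).  If `μ^A = F·λ^A` on an open set `U`, then
`(2FF̄ + α²)·P^{AA'}_e λ_A λ̄_{A'} = 0` on `U`, and hence `λ` vanishes on `U`. -/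
theorem stmt_15 (α : ℝ) (hα : α ≠ 0)
    (lam mu : (Fin 3 → ℝ) → Fin 2 → ℂ) (F : (Fin 3 → ℝ) → ℂ)
    (Dlam Dmu : (Fin 3 → ℝ) → Fin 3 → Fin 2 → ℂ)
    (hdiff : ∀ Ab, Differentiable ℝ (fun x => lam x Ab) ∧
      Differentiable ℝ (fun x => mu x Ab))
    (htw1 : ∀ x e A, Dlam x e A =
      -Complex.I * α * (Real.sqrt 2 / 3) * ∑ A', pauliN e A A' * conj (mu x A'))
    (htw2 : ∀ x e A, Dmu x e A =
      Complex.I * α * (Real.sqrt 2 / 3) * ∑ A', pauliN e A A' * conj (lam x A'))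
    (hLeib : ∀ x e,
      fderiv ℝ (fun y => spPair (lam y) (mu y)) x (Pi.single e 1) =
        spPair (fun A => Dlam x e A) (mu x) + spPair (lam x) (fun A => Dmu x e A))
    (U : Set (Fin 3 → ℝ)) (hU : IsOpen U)
    (hF : ∀ x ∈ U, ∀ A, mu x A = F x * lam x A) :
    ∀ x ∈ U,
      (∀ e, (2 * F x * conj (F x) + ((α : ℂ)) ^ 2) *
          (∑ A, ∑ A', pauliN e A A' * lam x A * conj (lam x A')) = 0) ∧
      (∀ A, lam x A = 0) := by
  intro x hx
  have hzero : fderiv ℝ (fun y => spPair (lam y) (mu y)) x = 0 := by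
    have heq : (fun y => spPair (lam y) (mu y)) =ᶠ[nhds x] fun _ => (0 : ℂ) := by
      filter_upwards [hU.mem_nhds hx] with y hy
      simp only [spPair, hF y hy]
      ring
    rw [heq.fderiv_eq, fderiv_fun_const]
    rfl
  have key := hLeib x 1
  rw [hzero] at key
  simp only [ContinuousLinearMap.zero_apply, spPair, htw1, htw2, hF x hx, map_mul,
    Fin.sum_univ_two, pauliN, Matrix.cons_val_one, Matrix.head_cons,
    Matrix.smul_apply, Matrix.cons_val', Matrix.cons_val_zero, Matrix.empty_val',
    Matrix.cons_val_fin_one, Matrix.head_fin_const, Matrix.of_apply,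
    Matrix.cons_val_one, smul_eq_mul] at key
  set a := lam x 0 with ha
  set b := lam x 1 with hb
  set f := F x with hf
  have h2 : ((α : ℂ) * (Real.sqrt 2 : ℝ) * (((Real.sqrt 2)⁻¹ : ℝ) : ℂ) / 3) *
      ((f * conj f + 1) * (a * conj a + b * conj b)) = 0 := by
    linear_combination key + ((α : ℂ) * (Real.sqrt 2 : ℝ) * (((Real.sqrt 2)⁻¹ : ℝ) : ℂ) / 3) *
      ((f * conj f + 1) * (a * conj a + b * conj b)) * Complex.I_sq
  have hc : ((α : ℂ) * (Real.sqrt 2 : ℝ) * (((Real.sqrt 2)⁻¹ : ℝ) : ℂ) / 3) ≠ 0 := by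
    have h1 : Real.sqrt 2 ≠ 0 := by positivity
    simp [Complex.ofReal_ne_zero, hα, h1]
  have h3 : (f * conj f + 1) * (a * conj a + b * conj b) = 0 :=
    (mul_eq_zero.1 h2).resolve_left hc
  rw [Complex.mul_conj, Complex.mul_conj, Complex.mul_conj] at h3
  have h4 : (a * conj a + b * conj b : ℂ) = 0 := by
    rcases mul_eq_zero.1 h3 with h | h
    · exfalso
      have : (Complex.normSq f + 1 : ℝ) = 0 := by
        exact_mod_cast h
      nlinarith [Complex.normSq_nonneg f]
    · rw [Complex.mul_conj, Complex.mul_conj]; exact h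
  rw [Complex.mul_conj, Complex.mul_conj] at h4
  have h5 : (Complex.normSq a + Complex.normSq b : ℝ) = 0 := by exact_mod_cast h4
  have hA : a = 0 := by
    rw [← Complex.normSq_eq_zero]
    nlinarith [Complex.normSq_nonneg a, Complex.normSq_nonneg b]
  have hB : b = 0 := by
    rw [← Complex.normSq_eq_zero]
    nlinarith [Complex.normSq_nonneg a, Complex.normSq_nonneg b]
  have hlam : ∀ A, lam x A = 0 := by
    intro A
    fin_cases A
    · exact hA
    · exact hB
  refine ⟨fun e => ?_, hlam⟩
  simp [Fin.sum_univ_two, hlam 0, hlam 1]
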